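/- For a real number a > 0 and all z > 0, K_a(z)/K_{a-1}(z) < (a + √(z^2 + a^2))/z, and consequently K_a(z)/K_{a-1}(z) < 2a/z + 1. -/

import Mathlib

open Real Set MeasureTheory
open Filter

lemma myCosh_le_exp (x : ℝ) : Real.cosh x ≤ Real.exp |x| := by
  rw [Real.cosh_eq]
  have h1 : Real.exp x ≤ Real.exp |x| := Real.exp_le_exp.2 (le_abs_self x)
  have h2 : Real.exp (-x) ≤ Real.exp |x| := Real.exp_le_exp.2 (neg_le_abs x)
  linarith

lemma mySq_le_cosh (t : ℝ) (ht : 0 ≤ t) : t ^ 2 / 8 ≤ Real.cosh t := by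
  have h1 : 1 + t / 2 ≤ Real.exp (t / 2) := by linarith [Real.add_one_le_exp (t / 2)]
  have h2 : Real.exp (t / 2) ^ 2 = Real.exp t := by
    rw [← Real.exp_nat_mul]; ring_nf
  have h3 : (1 + t / 2) ^ 2 ≤ Real.exp t := by
    rw [← h2]
    have h0 : (0:ℝ) ≤ 1 + t / 2 := by linarith
    exact pow_le_pow_left₀ h0 h1 2
  have h4 : Real.exp t / 2 ≤ Real.cosh t := by
    rw [Real.cosh_eq]
    have := (Real.exp_pos (-t)).le
    linarith
  nlinarith

lemma myKeyBound {z : ℝ} (hz : 0 < z) (c t : ℝ) (ht : 0 ≤ t) :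
    Real.exp (-z * Real.cosh t) * Real.exp (c * t) ≤
      Real.exp (2 * (|c| + 1) ^ 2 / z) * Real.exp (-t) := by
  rw [← Real.exp_add, ← Real.exp_add]
  apply Real.exp_le_exp.2
  have hc : c * t ≤ (|c| + 1) * t - t := by
    have : c ≤ |c| := le_abs_self c
    nlinarith
  have hcosh := mySq_le_cosh t ht
  have h1 : z * (t ^ 2 / 8) ≤ z * Real.cosh t := by
    exact mul_le_mul_of_nonneg_left hcosh hz.le
  have h2 : (|c| + 1) * t ≤ z * (t ^ 2 / 8) + 2 * (|c| + 1) ^ 2 / z := by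
    have key : 0 ≤ (z * t - 4 * (|c| + 1)) ^ 2 := sq_nonneg _
    have h8 : 0 < z := hz
    rw [← sub_nonneg]
    have expand : z * (t ^ 2 / 8) + 2 * (|c| + 1) ^ 2 / z - (|c| + 1) * t =
        (z * t - 4 * (|c| + 1)) ^ 2 / (8 * z) := by
      field_simp
      ring
    rw [expand]
    positivity
  nlinarith

/-- Master integrability lemma. -/
lemma myIntegrable {z : ℝ} (hz : 0 < z) (g : ℝ → ℝ) (hg : Continuous g) (B c : ℝ)
    (hbound : ∀ t, 0 ≤ t → |g t| ≤ B * Real.exp (c * t)) :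
    IntegrableOn (fun t => Real.exp (-z * Real.cosh t) * g t) (Ioi (0:ℝ)) := by
  have hB : 0 ≤ B := by
    have := hbound 0 le_rfl
    have h0 := abs_nonneg (g 0)
    nlinarith [Real.exp_pos (c * 0)]
  have hmaj : IntegrableOn (fun t => (B * Real.exp (2 * (|c| + 1) ^ 2 / z)) * Real.exp (-t))
      (Ioi (0:ℝ)) := by
    have h1 : IntegrableOn (fun t => Real.exp (-1 * t)) (Ioi (0:ℝ)) :=
      exp_neg_integrableOn_Ioi 0 one_pos
    have h2 := h1.const_mul (B * Real.exp (2 * (|c| + 1) ^ 2 / z))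
    simp only [neg_one_mul] at h2
    exact h2
  apply Integrable.mono' hmaj
  · exact ((Real.continuous_exp.comp ((continuous_const.mul Real.continuous_cosh))).mul
      hg).aestronglyMeasurable
  · rw [ae_restrict_iff' measurableSet_Ioi]
    filter_upwards with t ht
    have ht' : (0:ℝ) ≤ t := le_of_lt ht
    have h1 : |Real.exp (-z * Real.cosh t) * g t| =
        Real.exp (-z * Real.cosh t) * |g t| := by
      rw [abs_mul, abs_of_pos (Real.exp_pos _)]
    rw [Real.norm_eq_abs, h1]
    calc Real.exp (-z * Real.cosh t) * |g t|
        ≤ Real.exp (-z * Real.cosh t) * (B * Real.exp (c * t)) :=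
          mul_le_mul_of_nonneg_left (hbound t ht') (Real.exp_pos _).le
      _ = B * (Real.exp (-z * Real.cosh t) * Real.exp (c * t)) := by ring
      _ ≤ B * (Real.exp (2 * (|c| + 1) ^ 2 / z) * Real.exp (-t)) :=
          mul_le_mul_of_nonneg_left (myKeyBound hz c t ht') hB
      _ = (B * Real.exp (2 * (|c| + 1) ^ 2 / z)) * Real.exp (-t) := by ring

noncomputable def besselK' (ν z : ℝ) : ℝ :=
  ∫ t in Ioi (0 : ℝ), Real.exp (-z * Real.cosh t) * Real.cosh (ν * t)

lemma besselK'_integrableOn (ν : ℝ) {z : ℝ} (hz : 0 < z) :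
    IntegrableOn (fun t => Real.exp (-z * Real.cosh t) * Real.cosh (ν * t)) (Ioi (0:ℝ)) := by
  apply myIntegrable hz _ (Real.continuous_cosh.comp (continuous_const.mul continuous_id)) 1 |ν|
  intro t ht
  show |Real.cosh (ν * t)| ≤ 1 * Real.exp (|ν| * t)
  rw [abs_of_pos (Real.cosh_pos _)]
  calc Real.cosh (ν * t) ≤ Real.exp |ν * t| := myCosh_le_exp _
    _ = 1 * Real.exp (|ν| * t) := by rw [abs_mul, abs_of_nonneg ht, one_mul]

lemma besselK'_pos (ν : ℝ) {z : ℝ} (hz : 0 < z) : 0 < besselK' ν z := by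
  have hnn : 0 ≤ᵐ[volume.restrict (Ioi (0:ℝ))]
      fun t => Real.exp (-z * Real.cosh t) * Real.cosh (ν * t) := by
    filter_upwards with t
    exact (mul_pos (Real.exp_pos _) (Real.cosh_pos _)).le
  rw [besselK', setIntegral_pos_iff_support_of_nonneg_ae hnn (besselK'_integrableOn ν hz)]
  have hsub : Ioi (0:ℝ) ⊆ (Function.support fun t =>
      Real.exp (-z * Real.cosh t) * Real.cosh (ν * t)) ∩ Ioi 0 := by
    intro t ht
    exact ⟨(mul_pos (Real.exp_pos _) (Real.cosh_pos _)).ne', ht⟩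
  calc (0:ENNReal) < volume (Ioi (0:ℝ)) := by simp
    _ ≤ _ := measure_mono hsub

lemma mySinh_le_cosh (x : ℝ) : Real.sinh x ≤ Real.cosh x := by
  rw [Real.sinh_eq, Real.cosh_eq]; linarith [Real.exp_pos (-x)]

lemma myAbs_sinh_le_exp (x : ℝ) : |Real.sinh x| ≤ Real.exp |x| := by
  rw [Real.abs_sinh]
  calc Real.sinh |x| ≤ Real.cosh |x| := mySinh_le_cosh _
    _ ≤ Real.exp |(|x|)| := myCosh_le_exp _
    _ = Real.exp |x| := by rw [abs_abs]

lemma myProd_identity (a t : ℝ) : Real.sinh t * Real.sinh (a * t) =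
    (Real.cosh ((a + 1) * t) - Real.cosh ((a - 1) * t)) / 2 := by
  have h1 : (a + 1) * t = a * t + t := by ring
  have h2 : (a - 1) * t = a * t - t := by ring
  rw [h1, h2, Real.cosh_add, Real.cosh_sub]
  ring

lemma besselK'_recurrence (a : ℝ) {z : ℝ} (hz : 0 < z) :
    2 * a * besselK' a z = z * (besselK' (a + 1) z - besselK' (a - 1) z) := by
  set F : ℝ → ℝ := fun t => Real.exp (-z * Real.cosh t) * Real.sinh (a * t) with hF
  set f' : ℝ → ℝ := fun t =>
    Real.exp (-z * Real.cosh t) * (a * Real.cosh (a * t) - z * (Real.sinh t * Real.sinh (a * t)))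
    with hf'
  have hderiv : ∀ t ∈ Ici (0:ℝ), HasDerivAt F (f' t) t := by
    intro t _
    have h1 : HasDerivAt (fun t : ℝ => -z * Real.cosh t) (-z * Real.sinh t) t :=
      (Real.hasDerivAt_cosh t).const_mul (-z)
    have hexp := h1.exp
    have h2 : HasDerivAt (fun t : ℝ => a * t) a t := by
      simpa using (hasDerivAt_id t).const_mul a
    have h3 := h2.sinh
    have := hexp.fun_mul h3
    refine this.congr_deriv ?_
    show _ = Real.exp (-z * Real.cosh t) * (a * Real.cosh (a * t) - z * (Real.sinh t * Real.sinh (a * t)))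
    ring
  have hint : IntegrableOn f' (Ioi (0:ℝ)) := by
    apply myIntegrable hz _ ?_ (|a| + z) (|a| + 1)
    · intro t ht
      have b1 : |a * Real.cosh (a * t)| ≤ |a| * Real.exp (|a| * t) := by
        rw [abs_mul, abs_of_pos (Real.cosh_pos _)]
        apply mul_le_mul_of_nonneg_left _ (abs_nonneg a)
        calc Real.cosh (a * t) ≤ Real.exp |a * t| := myCosh_le_exp _
          _ = Real.exp (|a| * t) := by rw [abs_mul, abs_of_nonneg ht]
      have b2 : |z * (Real.sinh t * Real.sinh (a * t))| ≤
          z * (Real.exp t * Real.exp (|a| * t)) := by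
        rw [abs_mul, abs_of_pos hz, abs_mul]
        apply mul_le_mul_of_nonneg_left _ hz.le
        apply mul_le_mul (by simpa [abs_of_nonneg ht] using myAbs_sinh_le_exp t)
          (by simpa [abs_mul, abs_of_nonneg ht] using myAbs_sinh_le_exp (a * t))
          (abs_nonneg _) (Real.exp_pos _).le
      calc |a * Real.cosh (a * t) - z * (Real.sinh t * Real.sinh (a * t))|
          ≤ |a * Real.cosh (a * t)| + |z * (Real.sinh t * Real.sinh (a * t))| := abs_sub _ _
        _ ≤ |a| * Real.exp (|a| * t) + z * (Real.exp t * Real.exp (|a| * t)) := by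
            linarith
        _ ≤ (|a| + z) * Real.exp ((|a| + 1) * t) := by
            rw [← Real.exp_add]
            have e1 : Real.exp (|a| * t) ≤ Real.exp ((|a| + 1) * t) :=
              Real.exp_le_exp.2 (by nlinarith)
            have e2 : Real.exp (t + |a| * t) = Real.exp ((|a| + 1) * t) := by ring_nf
            rw [e2]
            nlinarith [mul_le_mul_of_nonneg_left e1 (abs_nonneg a)]
    · exact continuous_const.mul (Real.continuous_cosh.comp (continuous_const.mul continuous_id))
        |>.sub (continuous_const.mul (Real.continuous_sinh.mul
          (Real.continuous_sinh.comp (continuous_const.mul continuous_id))))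
  have htend : Tendsto F atTop (nhds 0) := by
    have hg : Tendsto (fun t : ℝ => Real.exp (2 * (|(|a|)| + 1) ^ 2 / z) * Real.exp (-t))
        atTop (nhds 0) := by
      have h1 : Tendsto (fun t : ℝ => Real.exp (-t)) atTop (nhds 0) := by
        simpa using Real.tendsto_exp_neg_atTop_nhds_zero
      simpa using h1.const_mul (Real.exp (2 * (|(|a|)| + 1) ^ 2 / z))
    apply squeeze_zero_norm' _ hg
    filter_upwards [Filter.eventually_ge_atTop (0:ℝ)] with t ht
    have h2 : ‖F t‖ ≤ Real.exp (-z * Real.cosh t) * Real.exp (|a| * t) := by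
      rw [hF, Real.norm_eq_abs, abs_mul, abs_of_pos (Real.exp_pos _)]
      apply mul_le_mul_of_nonneg_left _ (Real.exp_pos _).le
      simpa [abs_mul, abs_of_nonneg ht] using myAbs_sinh_le_exp (a * t)
    exact h2.trans (myKeyBound hz |a| t ht)
  have hFTC := integral_Ioi_of_hasDerivAt_of_tendsto'
    (fun x hx => hderiv x hx) hint htend
  have hF0 : F 0 = 0 := by simp [hF]
  rw [hF0, sub_zero] at hFTC
  -- split the integral
  have hsplit : ∀ t : ℝ, f' t =
      a * (Real.exp (-z * Real.cosh t) * Real.cosh (a * t))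
      - (z / 2) * (Real.exp (-z * Real.cosh t) * Real.cosh ((a + 1) * t))
      + (z / 2) * (Real.exp (-z * Real.cosh t) * Real.cosh ((a - 1) * t)) := by
    intro t
    rw [hf']
    simp only
    rw [myProd_identity a t]
    ring
  have hia := besselK'_integrableOn a hz
  have hip := besselK'_integrableOn (a + 1) hz
  have him := besselK'_integrableOn (a - 1) hz
  have hmain : (0:ℝ) = a * besselK' a z - (z / 2) * besselK' (a + 1) z
      + (z / 2) * besselK' (a - 1) z := by
    rw [← hFTC, integral_congr_ae (ae_of_all _ hsplit)]
    have i1 : Integrable (fun t : ℝ =>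
        a * (Real.exp (-z * Real.cosh t) * Real.cosh (a * t))
        - z / 2 * (Real.exp (-z * Real.cosh t) * Real.cosh ((a + 1) * t)))
        (volume.restrict (Ioi 0)) := (hia.const_mul a).sub (hip.const_mul (z / 2))
    rw [integral_add i1 (him.const_mul (z / 2)),
      integral_sub (hia.const_mul a) (hip.const_mul (z / 2)),
      integral_const_mul, integral_const_mul, integral_const_mul]
    rfl
  linarith

lemma myPointwise (a : ℝ) {t : ℝ} (ht : 0 < t) :
    Real.cosh (a * t) ^ 2 < Real.cosh ((a - 1) * t) * Real.cosh ((a + 1) * t) := by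
  have e1 : Real.cosh ((a - 1) * t) * Real.cosh ((a + 1) * t) =
      (Real.cosh (2 * (a * t)) + Real.cosh (2 * t)) / 2 := by
    have h1 : 2 * (a * t) = (a - 1) * t + (a + 1) * t := by ring
    have h2 : (2 : ℝ) * t = (a + 1) * t - (a - 1) * t := by ring
    rw [h1, h2, Real.cosh_add, Real.cosh_sub]
    ring
  have e2 : Real.cosh (a * t) ^ 2 = (Real.cosh (2 * (a * t)) + 1) / 2 := by
    rw [Real.cosh_two_mul]
    have := Real.cosh_sq (a * t)
    linarith
  have e3 : 1 < Real.cosh (2 * t) := Real.one_lt_cosh.2 (by positivity)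
  rw [e1, e2]
  linarith

lemma besselK'_turan (a : ℝ) {z : ℝ} (hz : 0 < z) :
    besselK' a z ^ 2 < besselK' (a - 1) z * besselK' (a + 1) z := by
  set μ := volume.restrict (Ioi (0:ℝ)) with hμ
  set h : ℝ → ℝ := fun t => Real.exp (-z * Real.cosh t) with hh
  set G : ℝ → ℝ := fun t => h t * Real.sqrt (Real.cosh ((a - 1) * t) * Real.cosh ((a + 1) * t))
    with hG
  have hcont_g : Continuous fun t : ℝ =>
      Real.sqrt (Real.cosh ((a - 1) * t) * Real.cosh ((a + 1) * t)) :=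
    Real.continuous_sqrt.comp ((Real.continuous_cosh.comp (continuous_const.mul continuous_id)).mul
      (Real.continuous_cosh.comp (continuous_const.mul continuous_id)))
  have hGint : IntegrableOn G (Ioi (0:ℝ)) := by
    apply myIntegrable hz _ hcont_g 1 (|a| + 1)
    intro t ht
    rw [abs_of_nonneg (Real.sqrt_nonneg _), one_mul]
    have hb : ∀ b : ℝ, |b| ≤ |a| + 1 → Real.cosh (b * t) ≤ Real.exp ((|a| + 1) * t) := by
      intro b hbb
      calc Real.cosh (b * t) ≤ Real.exp |b * t| := myCosh_le_exp _
        _ ≤ Real.exp ((|a| + 1) * t) := Real.exp_le_exp.2 (by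
            rw [abs_mul, abs_of_nonneg ht]
            exact mul_le_mul_of_nonneg_right hbb ht)
    have h1 := hb (a - 1) (by cases abs_cases a <;> cases abs_cases (a - 1) <;> linarith)
    have h2 := hb (a + 1) (by cases abs_cases a <;> cases abs_cases (a + 1) <;> linarith)
    calc Real.sqrt (Real.cosh ((a - 1) * t) * Real.cosh ((a + 1) * t))
        ≤ Real.sqrt (Real.exp ((|a| + 1) * t) * Real.exp ((|a| + 1) * t)) := by
          apply Real.sqrt_le_sqrt
          exact mul_le_mul h1 h2 (Real.cosh_pos _).le (Real.exp_pos _).le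
      _ = Real.exp ((|a| + 1) * t) := Real.sqrt_mul_self (Real.exp_pos _).le
  have hFint := besselK'_integrableOn a hz
  -- strict inequality K_a < ∫ G
  have hstrict : besselK' a z < ∫ t in Ioi (0:ℝ), G t := by
    have hdiff : 0 < ∫ t in Ioi (0:ℝ), (G t - Real.exp (-z * Real.cosh t) * Real.cosh (a * t)) := by
      rw [setIntegral_pos_iff_support_of_nonneg_ae]
      · have h0 : (0:ENNReal) < volume (Ioi (0:ℝ)) := by simp
        refine lt_of_lt_of_le h0 (measure_mono ?_)
        intro t ht
        refine ⟨?_, ht⟩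
        have hlt : Real.cosh (a * t) <
            Real.sqrt (Real.cosh ((a - 1) * t) * Real.cosh ((a + 1) * t)) :=
          Real.lt_sqrt_of_sq_lt (myPointwise a ht)
        have : Real.exp (-z * Real.cosh t) * Real.cosh (a * t) < G t :=
          mul_lt_mul_of_pos_left hlt (Real.exp_pos _)
        exact sub_ne_zero.2 this.ne'
      · refine (ae_restrict_iff' measurableSet_Ioi).2 ?_
        filter_upwards with t ht
        have hlt : Real.cosh (a * t) <
            Real.sqrt (Real.cosh ((a - 1) * t) * Real.cosh ((a + 1) * t)) :=
          Real.lt_sqrt_of_sq_lt (myPointwise a ht)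
        have : Real.exp (-z * Real.cosh t) * Real.cosh (a * t) < G t :=
          mul_lt_mul_of_pos_left hlt (Real.exp_pos _)
        simp only [Pi.zero_apply]
        linarith
      · exact hGint.sub hFint
    rw [integral_sub hGint hFint] at hdiff
    rw [besselK']
    linarith
  -- Cauchy-Schwarz
  have hCS : ∫ t in Ioi (0:ℝ), G t ≤
      (besselK' (a - 1) z) ^ ((1:ℝ)/2) * (besselK' (a + 1) z) ^ ((1:ℝ)/2) := by
    set f1 : ℝ → ℝ := fun t => Real.sqrt (h t * Real.cosh ((a - 1) * t)) with hf1
    set f2 : ℝ → ℝ := fun t => Real.sqrt (h t * Real.cosh ((a + 1) * t)) with hf2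
    have hpq : Real.HolderConjugate 2 2 := Real.holderConjugate_iff.mpr ⟨one_lt_two, by norm_num⟩
    have hm1 : AEStronglyMeasurable f1 μ := (Real.continuous_sqrt.comp
      ((Real.continuous_exp.comp (continuous_const.mul Real.continuous_cosh)).mul
        (Real.continuous_cosh.comp (continuous_const.mul continuous_id)))).aestronglyMeasurable
    have hm2 : AEStronglyMeasurable f2 μ := (Real.continuous_sqrt.comp
      ((Real.continuous_exp.comp (continuous_const.mul Real.continuous_cosh)).mul
        (Real.continuous_cosh.comp (continuous_const.mul continuous_id)))).aestronglyMeasurable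
    have hsq1 : (fun t => f1 t ^ 2) = fun t => h t * Real.cosh ((a - 1) * t) := by
      funext t
      exact Real.sq_sqrt (mul_nonneg (Real.exp_pos _).le (Real.cosh_pos _).le)
    have hsq2 : (fun t => f2 t ^ 2) = fun t => h t * Real.cosh ((a + 1) * t) := by
      funext t
      exact Real.sq_sqrt (mul_nonneg (Real.exp_pos _).le (Real.cosh_pos _).le)
    have hml1 : MemLp f1 (ENNReal.ofReal 2) μ := by
      rw [show ENNReal.ofReal 2 = 2 by norm_num [ENNReal.ofReal_ofNat]]
      rw [memLp_two_iff_integrable_sq hm1, hsq1]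
      exact besselK'_integrableOn (a - 1) hz
    have hml2 : MemLp f2 (ENNReal.ofReal 2) μ := by
      rw [show ENNReal.ofReal 2 = 2 by norm_num [ENNReal.ofReal_ofNat]]
      rw [memLp_two_iff_integrable_sq hm2, hsq2]
      exact besselK'_integrableOn (a + 1) hz
    have key := integral_mul_le_Lp_mul_Lq_of_nonneg hpq
      (ae_of_all μ fun t => Real.sqrt_nonneg _) (ae_of_all μ fun t => Real.sqrt_nonneg _)
      hml1 hml2
    have hprod : (fun t => f1 t * f2 t) = G := by
      funext t
      rw [hf1, hf2, hG]
      simp only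
      rw [← Real.sqrt_mul (mul_nonneg (Real.exp_pos _).le (Real.cosh_pos _).le)]
      rw [show h t * Real.cosh ((a - 1) * t) * (h t * Real.cosh ((a + 1) * t)) =
        h t ^ 2 * (Real.cosh ((a - 1) * t) * Real.cosh ((a + 1) * t)) by ring]
      rw [Real.sqrt_mul (sq_nonneg _), Real.sqrt_sq (Real.exp_pos _).le]
    have hrpow1 : (fun t => f1 t ^ (2:ℝ)) = fun t => h t * Real.cosh ((a - 1) * t) := by
      funext t
      rw [Real.rpow_two]
      exact congrFun hsq1 t
    have hrpow2 : (fun t => f2 t ^ (2:ℝ)) = fun t => h t * Real.cosh ((a + 1) * t) := by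
      funext t
      rw [Real.rpow_two]
      exact congrFun hsq2 t
    calc ∫ t in Ioi (0:ℝ), G t = ∫ t, f1 t * f2 t ∂μ := by rw [hprod, hμ]
      _ ≤ (∫ t, f1 t ^ (2:ℝ) ∂μ) ^ ((1:ℝ)/2) * (∫ t, f2 t ^ (2:ℝ) ∂μ) ^ ((1:ℝ)/2) := key
      _ = (besselK' (a - 1) z) ^ ((1:ℝ)/2) * (besselK' (a + 1) z) ^ ((1:ℝ)/2) := by
          rw [hrpow1, hrpow2, besselK', besselK', hμ]
  have hKa := (besselK'_pos a hz).le
  have hKm := (besselK'_pos (a - 1) hz).le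
  have hKp := (besselK'_pos (a + 1) hz).le
  have hfin : besselK' a z < (besselK' (a - 1) z) ^ ((1:ℝ)/2) * (besselK' (a + 1) z) ^ ((1:ℝ)/2) :=
    lt_of_lt_of_le hstrict hCS
  have hsq := mul_self_lt_mul_self hKa hfin
  calc besselK' a z ^ 2 = besselK' a z * besselK' a z := sq (besselK' a z) ▸ by ring
    _ < ((besselK' (a - 1) z) ^ ((1:ℝ)/2) * (besselK' (a + 1) z) ^ ((1:ℝ)/2)) *
        ((besselK' (a - 1) z) ^ ((1:ℝ)/2) * (besselK' (a + 1) z) ^ ((1:ℝ)/2)) := hsq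
    _ = ((besselK' (a - 1) z) ^ ((1:ℝ)/2) * (besselK' (a - 1) z) ^ ((1:ℝ)/2)) *
        ((besselK' (a + 1) z) ^ ((1:ℝ)/2) * (besselK' (a + 1) z) ^ ((1:ℝ)/2)) := by ring
    _ = besselK' (a - 1) z * besselK' (a + 1) z := by
        rw [← Real.rpow_add' hKm (by norm_num), ← Real.rpow_add' hKp (by norm_num)]
        norm_num


/-- The modified Bessel function of the second kind, via its integral representation. -/
noncomputable def besselK (ν z : ℝ) : ℝ :=
  ∫ t in Ioi (0 : ℝ), Real.exp (-z * Real.cosh t) * Real.cosh (ν * t)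

/-- For `a > 0` and `z > 0`: `K_a(z)/K_{a-1}(z) < (a + √(z² + a²))/z`, and consequently
`K_a(z)/K_{a-1}(z) < 2a/z + 1`. -/
theorem besselK_ratio_upper_bound (a : ℝ) (ha : 0 < a) (z : ℝ) (hz : 0 < z) :
    besselK a z / besselK (a - 1) z < (a + Real.sqrt (z ^ 2 + a ^ 2)) / z ∧
    besselK a z / besselK (a - 1) z < 2 * a / z + 1 := by
  have hbk : ∀ ν : ℝ, besselK ν z = besselK' ν z := fun ν => rfl
  set k := besselK a z with hk'
  set b := besselK (a - 1) z with hb'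
  set p := besselK (a + 1) z with hp'
  have hk : 0 < k := by rw [hk', hbk]; exact besselK'_pos a hz
  have hb : 0 < b := by rw [hb', hbk]; exact besselK'_pos (a - 1) hz
  have hp : 0 < p := by rw [hp', hbk]; exact besselK'_pos (a + 1) hz
  have turan : k ^ 2 < b * p := by
    rw [hk', hb', hp', hbk, hbk, hbk]; exact besselK'_turan a hz
  have hrec : 2 * a * k = z * (p - b) := by
    rw [hk', hb', hp', hbk, hbk, hbk]; exact besselK'_recurrence a hz
  have e0 : z * p = 2 * a * k + z * b := by linear_combination -hrec
  have h1 : z * k ^ 2 < 2 * a * k * b + z * b ^ 2 := by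
    nlinarith [mul_lt_mul_of_pos_left turan hz, e0, hb]
  set s := Real.sqrt (z ^ 2 + a ^ 2) with hs'
  have hs2 : s ^ 2 = z ^ 2 + a ^ 2 := Real.sq_sqrt (by positivity)
  have hspos : 0 < s := Real.sqrt_pos.2 (by positivity)
  have has : a < s := by nlinarith
  have hs2b : s ^ 2 * b ^ 2 = (z ^ 2 + a ^ 2) * b ^ 2 := by rw [hs2]
  have hneg : (k * z - (a + s) * b) * (k * z - (a - s) * b) < 0 := by
    nlinarith [mul_lt_mul_of_pos_left h1 hz, hs2b]
  have hfac2 : 0 < k * z - (a - s) * b := by nlinarith [mul_pos hk hz, mul_pos hb hspos]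
  have hmain : k * z < (a + s) * b := by nlinarith [hneg, hfac2]
  have goal1 : k / b < (a + s) / z := (div_lt_div_iff₀ hb hz).2 hmain
  refine ⟨goal1, lt_of_lt_of_le goal1 ?_⟩
  have hsle : s ≤ a + z := by
    rw [hs']
    calc Real.sqrt (z ^ 2 + a ^ 2) ≤ Real.sqrt ((a + z) ^ 2) :=
          Real.sqrt_le_sqrt (by nlinarith)
      _ = a + z := Real.sqrt_sq (by positivity)
  rw [div_le_iff₀ hz]
  field_simp
  linarith
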